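/- Let G be a simple graph on a finite vertex set with at least two vertices and let NM(G) = A·L be its neighbourhood matrix. Then NM(G) has no zero entries if and only if G has diameter at most 2, i.e., if and only if every pair of distinct vertices i and j is joined by a walk of length at most 2. -/

import Mathlib

open SimpleGraph Matrix Finset

private lemma nm_entry {V : Type*} [Fintype V] [DecidableEq V]
    (G : SimpleGraph V) [DecidableRel G.Adj] (i j : V) :
    (G.adjMatrix ℤ * G.lapMatrix ℤ) i j =
      (if G.Adj i j then (G.degree j : ℤ) else 0) -
        ((G.neighborFinset i ∩ G.neighborFinset j).card : ℤ) := by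
  rw [show G.lapMatrix ℤ = G.degMatrix ℤ - G.adjMatrix ℤ from rfl, Matrix.mul_sub]
  simp only [Matrix.sub_apply, adjMatrix_mul_apply, degMatrix, Matrix.diagonal_apply,
    adjMatrix_apply]
  congr 1
  · rw [Finset.sum_ite_eq' (G.neighborFinset i) j fun k => (G.degree k : ℤ)]
    simp [mem_neighborFinset]
  · rw [Finset.sum_boole]
    rw [Nat.cast_inj]
    congr 1
    ext u
    simp only [Finset.mem_filter, Finset.mem_inter, mem_neighborFinset]
    constructor
    · rintro ⟨h1, h2⟩; exact ⟨h1, h2.symm⟩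
    · rintro ⟨h1, h2⟩; exact ⟨h1, h2.symm⟩

theorem nm_no_zero_iff_diameter_le_two {V : Type*} [Fintype V] [DecidableEq V]
    [Nontrivial V] (G : SimpleGraph V) [DecidableRel G.Adj] :
    (∀ i j : V, (G.adjMatrix ℤ * G.lapMatrix ℤ) i j ≠ 0) ↔
      ∀ i j : V, i ≠ j → ∃ w : G.Walk i j, w.length ≤ 2 := by
  constructor
  · intro h i j hij
    by_cases hadj : G.Adj i j
    · exact ⟨hadj.toWalk, by simp⟩
    · have := h i j
      rw [nm_entry, if_neg hadj, zero_sub, neg_ne_zero] at this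
      have hc : (G.neighborFinset i ∩ G.neighborFinset j).Nonempty := by
        rw [Finset.nonempty_iff_ne_empty]
        intro he
        simp [he] at this
      obtain ⟨k, hk⟩ := hc
      simp only [Finset.mem_inter, mem_neighborFinset] at hk
      exact ⟨(hk.1.toWalk.append hk.2.symm.toWalk), by simp⟩
  · intro h i j
    rw [nm_entry]
    by_cases hij : i = j
    · subst hij
      rw [if_neg (G.loopless.irrefl i), zero_sub, neg_ne_zero]
      obtain ⟨j, hj⟩ := exists_ne i
      obtain ⟨w, _⟩ := h i j (Ne.symm hj)
      have hne : (G.neighborFinset i ∩ G.neighborFinset i).Nonempty := by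
        cases w with
        | nil => exact absurd rfl hj
        | cons hadj _ =>
          exact ⟨_, by rw [Finset.inter_self, mem_neighborFinset]; exact hadj⟩
      have hpos := Finset.card_pos.mpr hne
      omega
    · by_cases hadj : G.Adj i j
      · rw [if_pos hadj]
        have hsub : G.neighborFinset i ∩ G.neighborFinset j ⊆
            (G.neighborFinset j).erase i := by
          intro k hk
          simp only [Finset.mem_inter, mem_neighborFinset] at hk
          exact Finset.mem_erase.mpr
            ⟨fun he => G.loopless.irrefl i (he ▸ hk.1), by rw [mem_neighborFinset]; exact hk.2⟩
        have hcard : (G.neighborFinset i ∩ G.neighborFinset j).card ≤ G.degree j - 1 := by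
          calc _ ≤ ((G.neighborFinset j).erase i).card := Finset.card_le_card hsub
          _ = G.degree j - 1 := by
            rw [Finset.card_erase_of_mem (by rw [mem_neighborFinset]; exact hadj.symm)]
            rfl
        have hdeg : 1 ≤ G.degree j := by
          rw [← G.card_neighborFinset_eq_degree]
          exact Finset.card_pos.mpr ⟨i, by rw [mem_neighborFinset]; exact hadj.symm⟩
        omega
      · rw [if_neg hadj, zero_sub, neg_ne_zero]
        obtain ⟨w, hw⟩ := h i j hij
        have hne : (G.neighborFinset i ∩ G.neighborFinset j).Nonempty := by
          cases w with
          | nil => exact absurd rfl hij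
          | cons h1 w' =>
            cases w' with
            | nil => exact absurd h1 hadj
            | cons h2 w'' =>
              cases w'' with
              | nil =>
                exact ⟨_, by
                  rw [Finset.mem_inter, mem_neighborFinset, mem_neighborFinset]
                  exact ⟨h1, h2.symm⟩⟩
              | cons h3 _ =>
                simp only [Walk.length_cons] at hw
                omega
        have hpos := Finset.card_pos.mpr hne
        omega
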